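/- For each positive integer j, the function φ_j(x) = √2 cos(πjx) is an eigenfunction of the Cramér–von Mises integral operator with eigenvalue 1/(j²π²); that is, ∫₀¹ c(x,y) √2 cos(πjy) dy = (1/(j²π²)) √2 cos(πjx) for all x ∈ [0,1], where c(x,y) = (1/2)x² + (1/2)y² - max(x,y) + 1/3. -/

import Mathlib

open Real MeasureTheory

/-- Cramér–von Mises kernel. -/
noncomputable def cvmKer (u v : ℝ) : ℝ := (1 / 2) * u ^ 2 + (1 / 2) * v ^ 2 - max u v + 1 / 3

/-- Antiderivative of `(c + y^2/2 + d*y) * cos (a*y)`. -/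
noncomputable def cvmG (a c d y : ℝ) : ℝ :=
  (c + y ^ 2 / 2 + d * y) * Real.sin (a * y) / a + (y + d) * Real.cos (a * y) / a ^ 2
    - Real.sin (a * y) / a ^ 3

lemma cvmG_hasDerivAt (a : ℝ) (ha : a ≠ 0) (c d y : ℝ) :
    HasDerivAt (cvmG a c d) ((c + y ^ 2 / 2 + d * y) * Real.cos (a * y)) y := by
  have hsin : ∀ z : ℝ, HasDerivAt (fun t => Real.sin (a * t)) (a * Real.cos (a * z)) z := by
    intro z
    have h := (Real.hasDerivAt_sin (a * z)).comp z ((hasDerivAt_id z).const_mul a)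
    exact h.congr_deriv (by ring)
  have hcos : ∀ z : ℝ, HasDerivAt (fun t => Real.cos (a * t)) (-(a * Real.sin (a * z))) z := by
    intro z
    have h := (Real.hasDerivAt_cos (a * z)).comp z ((hasDerivAt_id z).const_mul a)
    exact h.congr_deriv (by ring)
  have h1 : HasDerivAt (fun t : ℝ => c + t ^ 2 / 2 + d * t) (y + d) y := by
    have h := (((hasDerivAt_pow 2 y).div_const 2).const_add c).add ((hasDerivAt_id y).const_mul d)
    refine h.congr_deriv ?_
    simp
  have h2 : HasDerivAt (fun t : ℝ => t + d) 1 y := (hasDerivAt_id y).add_const d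
  have H := (((h1.mul (hsin y)).div_const a).add
    ((h2.mul (hcos y)).div_const (a ^ 2))).sub ((hsin y).div_const (a ^ 3))
  refine H.congr_deriv ?_
  field_simp
  ring

lemma cvm_key (a : ℝ) (ha : a ≠ 0) (hsa : Real.sin a = 0) (x : ℝ)
    (hx0 : 0 ≤ x) (hx1 : x ≤ 1) :
    (∫ y in (0:ℝ)..1, cvmKer x y * Real.cos (a * y)) = Real.cos (a * x) / a ^ 2 := by
  have hcont : Continuous fun y : ℝ => cvmKer x y * Real.cos (a * y) := by
    unfold cvmKer; fun_prop
  have hsplit : (∫ y in (0:ℝ)..x, cvmKer x y * Real.cos (a * y))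
      + (∫ y in x..(1:ℝ), cvmKer x y * Real.cos (a * y))
      = ∫ y in (0:ℝ)..1, cvmKer x y * Real.cos (a * y) :=
    intervalIntegral.integral_add_adjacent_intervals
      (hcont.intervalIntegrable _ _) (hcont.intervalIntegrable _ _)
  set c1 : ℝ := (1/2) * x ^ 2 - x + 1/3 with hc1
  set c2 : ℝ := (1/2) * x ^ 2 + 1/3 with hc2
  have hI1 : (∫ y in (0:ℝ)..x, cvmKer x y * Real.cos (a * y))
      = cvmG a c1 0 x - cvmG a c1 0 0 := by
    rw [show (∫ y in (0:ℝ)..x, cvmKer x y * Real.cos (a * y))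
        = ∫ y in (0:ℝ)..x, (c1 + y ^ 2 / 2 + 0 * y) * Real.cos (a * y) from ?_]
    · exact intervalIntegral.integral_eq_sub_of_hasDerivAt
        (fun y _ => cvmG_hasDerivAt a ha c1 0 y)
        ((by fun_prop : Continuous fun y : ℝ =>
          (c1 + y ^ 2 / 2 + 0 * y) * Real.cos (a * y)).intervalIntegrable _ _)
    · apply intervalIntegral.integral_congr
      intro y hy
      rw [Set.uIcc_of_le hx0] at hy
      have hmax : max x y = x := max_eq_left hy.2
      unfold cvmKer
      simp only [hmax, hc1]
      ring
  have hI2 : (∫ y in x..(1:ℝ), cvmKer x y * Real.cos (a * y))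
      = cvmG a c2 (-1) 1 - cvmG a c2 (-1) x := by
    rw [show (∫ y in x..(1:ℝ), cvmKer x y * Real.cos (a * y))
        = ∫ y in x..(1:ℝ), (c2 + y ^ 2 / 2 + (-1) * y) * Real.cos (a * y) from ?_]
    · exact intervalIntegral.integral_eq_sub_of_hasDerivAt
        (fun y _ => cvmG_hasDerivAt a ha c2 (-1) y)
        ((by fun_prop : Continuous fun y : ℝ =>
          (c2 + y ^ 2 / 2 + (-1) * y) * Real.cos (a * y)).intervalIntegrable _ _)
    · apply intervalIntegral.integral_congr
      intro y hy
      rw [Set.uIcc_of_le hx1] at hy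
      have hmax : max x y = y := max_eq_right hy.1
      unfold cvmKer
      simp only [hmax, hc2]
      ring
  rw [← hsplit, hI1, hI2]
  unfold cvmG
  rw [hc1, hc2]
  simp [hsa]
  field_simp
  ring

theorem cvm_eigenfunction (j : ℕ) (hj : 1 ≤ j) (x : ℝ) (hx : x ∈ Set.Icc (0:ℝ) 1) :
    (∫ y in Set.Icc (0:ℝ) 1, cvmKer x y * (Real.sqrt 2 * Real.cos (π * j * y))) =
      (1 / (j ^ 2 * π ^ 2)) * (Real.sqrt 2 * Real.cos (π * j * x)) := by
  obtain ⟨hx0, hx1⟩ := hx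
  have hjne : (j:ℝ) ≠ 0 := Nat.cast_ne_zero.mpr (by omega)
  set a : ℝ := π * j with ha
  have hane : a ≠ 0 := mul_ne_zero Real.pi_ne_zero hjne
  have hsa : Real.sin a = 0 := by
    rw [ha, mul_comm]; exact Real.sin_nat_mul_pi j
  have hicc : (∫ y in Set.Icc (0:ℝ) 1, cvmKer x y * (Real.sqrt 2 * Real.cos (a * y)))
      = ∫ y in (0:ℝ)..1, cvmKer x y * (Real.sqrt 2 * Real.cos (a * y)) := by
    rw [MeasureTheory.integral_Icc_eq_integral_Ioc,
      intervalIntegral.integral_of_le (by norm_num : (0:ℝ) ≤ 1)]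
  rw [hicc]
  have : (∫ y in (0:ℝ)..1, cvmKer x y * (Real.sqrt 2 * Real.cos (a * y)))
      = Real.sqrt 2 * ∫ y in (0:ℝ)..1, cvmKer x y * Real.cos (a * y) := by
    rw [← intervalIntegral.integral_const_mul]
    apply intervalIntegral.integral_congr
    intro y _
    ring
  rw [this, cvm_key a hane hsa x hx0 hx1, ha, mul_pow]
  have h2 : ((j:ℝ) ^ 2 * π ^ 2) ≠ 0 :=
    mul_ne_zero (pow_ne_zero _ hjne) (pow_ne_zero _ Real.pi_ne_zero)
  ring
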